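/- Let E₁, E₂, F be Banach spaces and 1 ≤ s < r < ∞. If a continuous bilinear mapping T : E₁×E₂ → F is absolutely (s;s,∞)-summing at the origin (∑_j ‖T(x_j,y_j)‖^s < ∞ whenever (x_j) ∈ ℓ_s^w(E₁) and (y_j) is bounded in E₂), then T is absolutely (r;r,∞)-summing at the origin (∑_j ‖T(x_j,y_j)‖^r < ∞ whenever (x_j) ∈ ℓ_r^w(E₁) and (y_j) is bounded in E₂). -/

import Mathlib

open scoped ENNReal NNReal

noncomputable section

/-- A sequence `x` in `E` is weakly `q`-summable (`0 < q < ∞`), i.e. belongs to `ℓ_q^w(E)`: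
`∑_j ‖φ (x j)‖^q < ∞` for every continuous linear functional `φ`. -/
def WeaklySummable (𝕜 : Type*) [RCLike 𝕜] {E : Type*} [NormedAddCommGroup E]
    [NormedSpace 𝕜 E] (q : ℝ) (x : ℕ → E) : Prop :=
  ∀ φ : E →L[𝕜] 𝕜, Summable fun j => ‖φ (x j)‖ ^ q

lemma aux_norm_coe_smul {𝕜 : Type*} [RCLike 𝕜] {E : Type*} [NormedAddCommGroup E]
    [NormedSpace 𝕜 E] {c : ℝ} (hc : 0 ≤ c) (v : E) : ‖((c : 𝕜)) • v‖ = c * ‖v‖ := by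
  rw [norm_smul, RCLike.norm_ofReal, abs_of_nonneg hc]

lemma aux_weak_bound {𝕜 : Type*} [RCLike 𝕜] {E₁ : Type*} [NormedAddCommGroup E₁]
    [NormedSpace 𝕜 E₁] {r : ℝ} (hr : 1 ≤ r) (x : ℕ → E₁)
    (hx : WeaklySummable 𝕜 r x) :
    ∃ W : ℝ, 0 ≤ W ∧ ∀ φ : E₁ →L[𝕜] 𝕜, ‖φ‖ ≤ 1 → ∀ n : ℕ,
      ∑ j ∈ Finset.range n, ‖φ (x j)‖ ^ r ≤ W := by
  have hr0 : (0:ℝ) < r := lt_of_lt_of_le one_pos hr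
  set p : ℝ≥0∞ := ENNReal.ofReal r with hpdef
  haveI : Fact (1 ≤ p) := ⟨ENNReal.one_le_ofReal.mpr hr⟩
  have hpt : p.toReal = r := ENNReal.toReal_ofReal hr0.le
  have hpt0 : 0 < p.toReal := by rw [hpt]; exact hr0
  -- the truncated coordinate functions
  set f : ℕ → (E₁ →L[𝕜] 𝕜) → ℕ → 𝕜 :=
    fun n φ j => if j < n then φ (x j) else 0 with hfdef
  have hvanish : ∀ (n : ℕ) (φ : E₁ →L[𝕜] 𝕜), ∀ j ∉ Finset.range n,
      ‖f n φ j‖ ^ p.toReal = 0 := by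
    intro n φ j hj
    rw [Finset.mem_range, not_lt] at hj
    simp [hfdef, Nat.not_lt.mpr hj, Real.zero_rpow hpt0.ne']
  have hmem : ∀ (n : ℕ) (φ : E₁ →L[𝕜] 𝕜), Memℓp (f n φ) p := by
    intro n φ
    exact memℓp_gen (summable_of_ne_finset_zero (hvanish n φ))
  have htsum : ∀ (n : ℕ) (φ : E₁ →L[𝕜] 𝕜),
      (∑' j, ‖f n φ j‖ ^ p.toReal) = ∑ j ∈ Finset.range n, ‖φ (x j)‖ ^ r := by
    intro n φ
    rw [tsum_eq_sum (hvanish n φ)]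
    apply Finset.sum_congr rfl
    intro j hj
    rw [Finset.mem_range] at hj
    simp [hfdef, hj, hpt]
  -- the linear truncation operators into `ℓ^r`
  set Vlin : ℕ → (E₁ →L[𝕜] 𝕜) →ₗ[𝕜] ↥(lp (fun _ : ℕ => 𝕜) p) :=
    fun n =>
      { toFun := fun φ => ⟨f n φ, hmem n φ⟩
        map_add' := by
          intro φ ψ
          apply Subtype.ext
          show f n (φ + ψ) = f n φ + f n ψ
          funext j
          by_cases h : j < n <;> simp [hfdef, h]
        map_smul' := by
          intro c φ
          apply Subtype.ext
          show f n (c • φ) = c • f n φ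
          funext j
          by_cases h : j < n <;> simp [hfdef, h] } with hVlin
  have happ : ∀ (n : ℕ) (φ : E₁ →L[𝕜] 𝕜) (j : ℕ),
      (Vlin n φ : ℕ → 𝕜) j = f n φ j := fun n φ j => rfl
  have hVnorm : ∀ (n : ℕ) (φ : E₁ →L[𝕜] 𝕜) {K : ℝ}, 0 ≤ K →
      (∑ j ∈ Finset.range n, ‖φ (x j)‖ ^ r ≤ K ^ r) → ‖Vlin n φ‖ ≤ K := by
    intro n φ K hK hle
    apply lp.norm_le_of_tsum_le hpt0 hK
    calc (∑' j, ‖(Vlin n φ : ℕ → 𝕜) j‖ ^ p.toReal)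
        = ∑ j ∈ Finset.range n, ‖φ (x j)‖ ^ r := htsum n φ
      _ ≤ K ^ r := hle
      _ = K ^ p.toReal := by rw [hpt]
  have hrinv : ∀ {A : ℝ}, 0 ≤ A → (A ^ (1/r)) ^ r = A := by
    intro A hA
    rw [← Real.rpow_mul hA, one_div, inv_mul_cancel₀ hr0.ne', Real.rpow_one]
  have hKn : ∀ n : ℕ, 0 ≤ (∑ j ∈ Finset.range n, ‖x j‖ ^ r) ^ (1/r) := fun n =>
    Real.rpow_nonneg (Finset.sum_nonneg fun j _ => Real.rpow_nonneg (norm_nonneg _) r) _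
  set V : ℕ → (E₁ →L[𝕜] 𝕜) →L[𝕜] ↥(lp (fun _ : ℕ => 𝕜) p) := fun n =>
    LinearMap.mkContinuous (Vlin n) ((∑ j ∈ Finset.range n, ‖x j‖ ^ r) ^ (1/r)) (by
      intro φ
      apply hVnorm n φ (mul_nonneg (hKn n) (norm_nonneg φ))
      rw [Real.mul_rpow (hKn n) (norm_nonneg φ),
        hrinv (Finset.sum_nonneg fun j _ => Real.rpow_nonneg (norm_nonneg _) r),
        Finset.sum_mul]
      apply Finset.sum_le_sum
      intro j _
      calc ‖φ (x j)‖ ^ r ≤ (‖φ‖ * ‖x j‖) ^ r :=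
            Real.rpow_le_rpow (norm_nonneg _) (φ.le_opNorm (x j)) hr0.le
        _ = ‖x j‖ ^ r * ‖φ‖ ^ r := by
            rw [Real.mul_rpow (norm_nonneg _) (norm_nonneg _), mul_comm]) with hV
  have hpt_bound : ∀ φ : E₁ →L[𝕜] 𝕜, ∃ Cφ : ℝ, ∀ n, ‖V n φ‖ ≤ Cφ := by
    intro φ
    have hts0 : 0 ≤ ∑' j, ‖φ (x j)‖ ^ r :=
      tsum_nonneg fun j => Real.rpow_nonneg (norm_nonneg _) r
    refine ⟨(∑' j, ‖φ (x j)‖ ^ r) ^ (1/r), fun n => ?_⟩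
    apply hVnorm n φ (Real.rpow_nonneg hts0 _)
    rw [hrinv hts0]
    exact Summable.sum_le_tsum _ (fun j _ => Real.rpow_nonneg (norm_nonneg _) r) (hx φ)
  obtain ⟨C', hC'⟩ := banach_steinhaus hpt_bound
  refine ⟨|C'| ^ r, Real.rpow_nonneg (abs_nonneg _) _, ?_⟩
  intro φ hφ n
  have hEq : ∑ j ∈ Finset.range n, ‖φ (x j)‖ ^ r = ‖V n φ‖ ^ r := by
    rw [← htsum n φ, ← hpt]
    exact (lp.norm_rpow_eq_tsum hpt0 (V n φ)).symm
  rw [hEq]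
  have h1 : ‖V n φ‖ ≤ |C'| := by
    calc ‖V n φ‖ ≤ C' * ‖φ‖ :=
        ((V n).le_opNorm φ).trans (mul_le_mul_of_nonneg_right (hC' n) (norm_nonneg φ))
      _ ≤ |C'| * 1 :=
        mul_le_mul (le_abs_self _) hφ (norm_nonneg _) (abs_nonneg _)
      _ = |C'| := mul_one _
  exact Real.rpow_le_rpow (norm_nonneg _) h1 hr0.le


set_option maxHeartbeats 1000000 in
lemma aux_uniform {𝕜 : Type*} [RCLike 𝕜] {E₁ E₂ F : Type*}
    [NormedAddCommGroup E₁] [NormedSpace 𝕜 E₁]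
    [NormedAddCommGroup E₂] [NormedSpace 𝕜 E₂]
    [NormedAddCommGroup F] [NormedSpace 𝕜 F]
    {s : ℝ} (hs : 1 ≤ s)
    (T : E₁ →L[𝕜] E₂ →L[𝕜] F)
    (hT : ∀ x : ℕ → E₁, WeaklySummable 𝕜 s x →
      ∀ y : ℕ → E₂, (∃ M : ℝ, ∀ j, ‖y j‖ ≤ M) →
        Summable fun j => ‖T (x j) (y j)‖ ^ s) :
    ∃ C : ℝ, 0 ≤ C ∧ ∀ (n : ℕ) (x : ℕ → E₁) (y : ℕ → E₂),
      (∀ φ : E₁ →L[𝕜] 𝕜, ‖φ‖ ≤ 1 → ∑ j ∈ Finset.range n, ‖φ (x j)‖ ^ s ≤ 1) →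
      (∀ j, ‖y j‖ ≤ 1) → ∑ j ∈ Finset.range n, ‖T (x j) (y j)‖ ^ s ≤ C := by
  have hs0 : (0:ℝ) < s := lt_of_lt_of_le one_pos hs
  by_contra hcon
  push_neg at hcon
  choose n X Y hX hY hsum using fun k : ℕ =>
    hcon ((2:ℝ)^k) (by positivity)
  -- a scaled bound valid for every functional
  have hXφ : ∀ (k : ℕ) (φ : E₁ →L[𝕜] 𝕜),
      ∑ j ∈ Finset.range (n k), ‖φ (X k j)‖ ^ s ≤ ‖φ‖ ^ s := by
    intro k φ
    rcases eq_or_ne φ 0 with rfl | hφ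
    · simp [Real.zero_rpow hs0.ne']
    · have hφpos : 0 < ‖φ‖ := norm_pos_iff.mpr hφ
      have hball : ‖((‖φ‖⁻¹ : ℝ) : 𝕜) • φ‖ ≤ 1 := by
        rw [norm_smul ((‖φ‖⁻¹ : ℝ) : 𝕜) φ, RCLike.norm_ofReal, abs_of_nonneg (inv_nonneg.mpr hφpos.le),
          inv_mul_cancel₀ hφpos.ne']
      have h2 := hX k (((‖φ‖⁻¹ : ℝ) : 𝕜) • φ) hball
      have h3 : ∀ j, ‖(((‖φ‖⁻¹ : ℝ) : 𝕜) • φ) (X k j)‖ ^ s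
          = (‖φ‖ ^ s)⁻¹ * ‖φ (X k j)‖ ^ s := by
        intro j
        rw [ContinuousLinearMap.smul_apply, aux_norm_coe_smul (inv_nonneg.mpr hφpos.le),
          Real.mul_rpow (inv_nonneg.mpr hφpos.le) (norm_nonneg _),
          Real.inv_rpow (norm_nonneg φ)]
      rw [Finset.sum_congr rfl (fun j _ => h3 j), ← Finset.mul_sum] at h2
      have hppos : 0 < ‖φ‖ ^ s := Real.rpow_pos_of_pos hφpos s
      calc ∑ j ∈ Finset.range (n k), ‖φ (X k j)‖ ^ s
          = (‖φ‖ ^ s) * ((‖φ‖ ^ s)⁻¹ * ∑ j ∈ Finset.range (n k), ‖φ (X k j)‖ ^ s) := by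
            rw [← mul_assoc, mul_inv_cancel₀ hppos.ne', one_mul]
        _ ≤ (‖φ‖ ^ s) * 1 := by
            exact mul_le_mul_of_nonneg_left h2 hppos.le
        _ = ‖φ‖ ^ s := mul_one _
  -- scaling factors
  set ε : ℕ → ℝ := fun k => (2:ℝ) ^ (-(k:ℝ)/s) with hεdef
  have hεpos : ∀ k, 0 < ε k := fun k => Real.rpow_pos_of_pos two_pos _
  have hεs : ∀ k, ε k ^ s = ((2:ℝ)^k)⁻¹ := by
    intro k
    rw [hεdef]
    rw [← Real.rpow_natCast (2:ℝ) k, ← Real.rpow_neg (by norm_num : (0:ℝ) ≤ 2),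
      ← Real.rpow_mul (by norm_num : (0:ℝ) ≤ 2)]
    congr 1
    field_simp
  -- the glued sequences
  set X2 : ℕ × ℕ → E₁ := fun q =>
    if q.2 < n q.1 then ((ε q.1 : ℝ) : 𝕜) • X q.1 q.2 else 0 with hX2
  set Y2 : ℕ × ℕ → E₂ := fun q =>
    if q.2 < n q.1 then Y q.1 q.2 else 0 with hY2
  set e : ℕ ≃ ℕ × ℕ := (Denumerable.eqv (ℕ × ℕ)).symm with he
  -- vanishing of rows off the blocks
  have hXvan : ∀ (φ : E₁ →L[𝕜] 𝕜) (k : ℕ), ∀ j ∉ Finset.range (n k),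
      ‖φ (X2 (k, j))‖ ^ s = 0 := by
    intro φ k j hj
    rw [Finset.mem_range, not_lt] at hj
    simp [hX2, Nat.not_lt.mpr hj, Real.zero_rpow hs0.ne']
  -- row sums for the functional side
  have hXrow : ∀ (φ : E₁ →L[𝕜] 𝕜) (k : ℕ),
      (∑' j, ‖φ (X2 (k, j))‖ ^ s) ≤ ((2:ℝ)^k)⁻¹ * ‖φ‖ ^ s := by
    intro φ k
    rw [tsum_eq_sum (hXvan φ k)]
    have : ∀ j ∈ Finset.range (n k),
        ‖φ (X2 (k, j))‖ ^ s = ε k ^ s * ‖φ (X k j)‖ ^ s := by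
      intro j hj
      rw [Finset.mem_range] at hj
      simp only [hX2, hj, if_true]
      rw [map_smul, aux_norm_coe_smul (hεpos k).le,
        Real.mul_rpow (hεpos k).le (norm_nonneg _)]
    rw [Finset.sum_congr rfl this, ← Finset.mul_sum, hεs k]
    exact mul_le_mul_of_nonneg_left (hXφ k φ) (by positivity)
  have hws : WeaklySummable 𝕜 s (fun m => X2 (e m)) := by
    intro φ
    have : Summable fun q : ℕ × ℕ => ‖φ (X2 q)‖ ^ s := by
      apply (summable_prod_of_nonneg (fun q => Real.rpow_nonneg (norm_nonneg _) s)).mpr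
      constructor
      · intro k
        exact summable_of_ne_finset_zero (hXvan φ k)
      · apply Summable.of_nonneg_of_le
          (fun k => tsum_nonneg fun j => Real.rpow_nonneg (norm_nonneg _) s)
          (fun k => hXrow φ k)
        have : (fun k : ℕ => ((2:ℝ)^k)⁻¹ * ‖φ‖ ^ s)
            = fun k : ℕ => ((1:ℝ)/2)^k * ‖φ‖ ^ s := by
          funext k
          rw [one_div, inv_pow]
        rw [this]
        exact summable_geometric_two.mul_right _
    exact (Equiv.summable_iff e).mpr this
  have hybdd : ∃ M : ℝ, ∀ m, ‖Y2 (e m)‖ ≤ M := by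
    refine ⟨1, fun m => ?_⟩
    by_cases h : (e m).2 < n (e m).1
    · simp only [hY2, h, if_true]
      exact hY _ _
    · simp [hY2, h]
  have Hsum := hT (fun m => X2 (e m)) hws (fun m => Y2 (e m)) hybdd
  have HP : Summable fun q : ℕ × ℕ => ‖T (X2 q) (Y2 q)‖ ^ s :=
    (Equiv.summable_iff e).mp Hsum
  have hrowsums :=
    ((summable_prod_of_nonneg
      (fun q => Real.rpow_nonneg (norm_nonneg _) s)).mp HP).2
  -- each row sum is at least 1
  have hlow : ∀ k, (1:ℝ) ≤ ∑' j, ‖T (X2 (k, j)) (Y2 (k, j))‖ ^ s := by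
    intro k
    have hvan : ∀ j ∉ Finset.range (n k), ‖T (X2 (k, j)) (Y2 (k, j))‖ ^ s = 0 := by
      intro j hj
      rw [Finset.mem_range, not_lt] at hj
      simp [hX2, hY2, Nat.not_lt.mpr hj, Real.zero_rpow hs0.ne']
    rw [tsum_eq_sum hvan]
    have hterm : ∀ j ∈ Finset.range (n k),
        ‖T (X2 (k, j)) (Y2 (k, j))‖ ^ s
          = ε k ^ s * ‖T (X k j) (Y k j)‖ ^ s := by
      intro j hj
      rw [Finset.mem_range] at hj
      simp only [hX2, hY2, hj, if_true]
      rw [map_smul, ContinuousLinearMap.smul_apply, aux_norm_coe_smul (hεpos k).le,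
        Real.mul_rpow (hεpos k).le (norm_nonneg _)]
    rw [Finset.sum_congr rfl hterm, ← Finset.mul_sum, hεs k]
    have h2k : (0:ℝ) < (2:ℝ)^k := by positivity
    calc (1:ℝ) = ((2:ℝ)^k)⁻¹ * (2:ℝ)^k := by rw [inv_mul_cancel₀ h2k.ne']
      _ ≤ ((2:ℝ)^k)⁻¹ * ∑ j ∈ Finset.range (n k), ‖T (X k j) (Y k j)‖ ^ s :=
        mul_le_mul_of_nonneg_left (hsum k).le (by positivity)
  obtain ⟨k, hk⟩ := (hrowsums.tendsto_atTop_zero.eventually_lt_const one_pos).exists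
  exact absurd (hlow k) (not_le.mpr hk)


set_option maxHeartbeats 1000000 in
/-- (Inclusion for bilinear mappings.) Let `1 ≤ s < r < ∞`. If a continuous
bilinear `T : E₁ × E₂ → F` is absolutely `(s;s,∞)`-summing at the origin, then it is
absolutely `(r;r,∞)`-summing at the origin. -/
theorem bilinear_inclusion_summing
    {𝕜 : Type*} [RCLike 𝕜] {E₁ E₂ F : Type*}
    [NormedAddCommGroup E₁] [NormedSpace 𝕜 E₁] [CompleteSpace E₁]
    [NormedAddCommGroup E₂] [NormedSpace 𝕜 E₂] [CompleteSpace E₂]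
    [NormedAddCommGroup F] [NormedSpace 𝕜 F] [CompleteSpace F]
    {r s : ℝ} (hs : 1 ≤ s) (hsr : s < r)
    (T : E₁ →L[𝕜] E₂ →L[𝕜] F)
    (hT : ∀ x : ℕ → E₁, WeaklySummable 𝕜 s x →
      ∀ y : ℕ → E₂, (∃ M : ℝ, ∀ j, ‖y j‖ ≤ M) →
        Summable fun j => ‖T (x j) (y j)‖ ^ s) :
    ∀ x : ℕ → E₁, WeaklySummable 𝕜 r x →
      ∀ y : ℕ → E₂, (∃ M : ℝ, ∀ j, ‖y j‖ ≤ M) →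
        Summable fun j => ‖T (x j) (y j)‖ ^ r := by
  have hs0 : (0:ℝ) < s := lt_of_lt_of_le one_pos hs
  have hr0 : (0:ℝ) < r := lt_trans hs0 hsr
  have hrs : (0:ℝ) < r - s := sub_pos.mpr hsr
  obtain ⟨C, hC0, hC⟩ := aux_uniform hs T hT
  intro x hx y hy
  obtain ⟨W, hW0, hW⟩ := aux_weak_bound (le_trans hs hsr.le) x hx
  obtain ⟨M, hM⟩ := hy
  set M' : ℝ := max M 1 with hM'def
  have hM'pos : (0:ℝ) < M' := lt_of_lt_of_le one_pos (le_max_right M 1)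
  set z : ℕ → E₂ := fun j => ((M'⁻¹ : ℝ) : 𝕜) • y j with hzdef
  have hz : ∀ j, ‖z j‖ ≤ 1 := by
    intro j
    rw [hzdef]
    rw [aux_norm_coe_smul (inv_nonneg.mpr hM'pos.le)]
    calc M'⁻¹ * ‖y j‖ ≤ M'⁻¹ * M' := by
          apply mul_le_mul_of_nonneg_left _ (inv_nonneg.mpr hM'pos.le)
          exact le_trans (hM j) (le_max_left M 1)
      _ = 1 := inv_mul_cancel₀ hM'pos.ne'
  set b : ℕ → ℝ := fun j => ‖T (x j) (z j)‖ with hbdef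
  have hb0 : ∀ j, 0 ≤ b j := fun j => norm_nonneg _
  have hkey : ∀ j, ‖T (x j) (y j)‖ ^ r = M' ^ r * b j ^ r := by
    intro j
    have hbval : b j = M'⁻¹ * ‖T (x j) (y j)‖ := by
      rw [hbdef]
      show ‖T (x j) (((M'⁻¹ : ℝ) : 𝕜) • y j)‖ = _
      rw [map_smul, aux_norm_coe_smul (inv_nonneg.mpr hM'pos.le)]
    have hval : ‖T (x j) (y j)‖ = M' * b j := by
      rw [hbval, ← mul_assoc, mul_inv_cancel₀ hM'pos.ne', one_mul]
    rw [hval, Real.mul_rpow hM'pos.le (hb0 j)]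
  -- exponent bookkeeping
  have hp : Real.HolderConjugate (r/(r-s)) (r/s) := by
    rw [Real.holderConjugate_iff]
    constructor
    · rw [lt_div_iff₀ hrs]
      linarith
    · rw [inv_div, inv_div]
      field_simp
      ring
  set W' : ℝ := W + 1 with hW'def
  have hW'pos : (0:ℝ) < W' := by rw [hW'def]; linarith
  set D : ℝ := (max C 1) ^ (r/s) * W' with hDdef
  have hmaxC : (0:ℝ) < max C 1 := lt_of_lt_of_le one_pos (le_max_right C 1)
  have hD0 : 0 ≤ D :=
    mul_nonneg (Real.rpow_nonneg hmaxC.le _) hW'pos.le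
  have hbound : ∀ N, ∑ j ∈ Finset.range N, b j ^ r ≤ D := by
    intro N
    set A : ℝ := ∑ j ∈ Finset.range N, b j ^ r with hAdef
    have hA0 : 0 ≤ A :=
      Finset.sum_nonneg fun j _ => Real.rpow_nonneg (hb0 j) r
    rcases eq_or_lt_of_le hA0 with hA | hApos
    · rw [← hA]; exact hD0
    · set d : ℕ → ℝ := fun j => b j ^ ((r-s)/s) with hddef
      have hd0 : ∀ j, 0 ≤ d j := fun j => Real.rpow_nonneg (hb0 j) _
      have hds : ∀ j, d j ^ s = b j ^ (r - s) := by
        intro j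
        rw [hddef]
        rw [← Real.rpow_mul (hb0 j), div_mul_cancel₀ _ hs0.ne']
      set B : ℝ := A ^ ((r-s)/r) * W' ^ (s/r) with hBdef
      have hBpos : 0 < B :=
        mul_pos (Real.rpow_pos_of_pos hApos _) (Real.rpow_pos_of_pos hW'pos _)
      set c0 : ℝ := B⁻¹ ^ s⁻¹ with hc0def
      have hc00 : 0 ≤ c0 := Real.rpow_nonneg (inv_nonneg.mpr hBpos.le) _
      have hc0s : c0 ^ s = B⁻¹ := by
        rw [hc0def, ← Real.rpow_mul (inv_nonneg.mpr hBpos.le),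
          inv_mul_cancel₀ hs0.ne', Real.rpow_one]
      set u : ℕ → E₁ := fun j => ((c0 * d j : ℝ) : 𝕜) • x j with hudef
      have huφ : ∀ φ : E₁ →L[𝕜] 𝕜, ‖φ‖ ≤ 1 →
          ∑ j ∈ Finset.range N, ‖φ (u j)‖ ^ s ≤ 1 := by
        intro φ hφ
        have hterm : ∀ j, ‖φ (u j)‖ ^ s
            = B⁻¹ * (b j ^ (r-s) * ‖φ (x j)‖ ^ s) := by
          intro j
          show ‖φ (((c0 * d j : ℝ) : 𝕜) • x j)‖ ^ s = _
          rw [map_smul, aux_norm_coe_smul (mul_nonneg hc00 (hd0 j)),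
            Real.mul_rpow (mul_nonneg hc00 (hd0 j)) (norm_nonneg _),
            Real.mul_rpow hc00 (hd0 j), hc0s, hds j, mul_assoc]
        rw [Finset.sum_congr rfl (fun j _ => hterm j), ← Finset.mul_sum]
        have hHold : ∑ j ∈ Finset.range N, b j ^ (r-s) * ‖φ (x j)‖ ^ s ≤ B := by
          have h1 := Real.inner_le_Lp_mul_Lq_of_nonneg (Finset.range N)
            (f := fun j => b j ^ (r-s)) (g := fun j => ‖φ (x j)‖ ^ s) hp
            (fun j _ => Real.rpow_nonneg (hb0 j) _)
            (fun j _ => Real.rpow_nonneg (norm_nonneg _) _)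
          have e1 : ∀ j, (b j ^ (r-s)) ^ (r/(r-s)) = b j ^ r := by
            intro j
            rw [← Real.rpow_mul (hb0 j), mul_div_cancel₀ _ hrs.ne']
          have e2 : ∀ j, (‖φ (x j)‖ ^ s) ^ (r/s) = ‖φ (x j)‖ ^ r := by
            intro j
            rw [← Real.rpow_mul (norm_nonneg _), mul_div_cancel₀ _ hs0.ne']
          rw [Finset.sum_congr rfl (fun j _ => e1 j),
            Finset.sum_congr rfl (fun j _ => e2 j),
            one_div_div, one_div_div] at h1
          refine h1.trans ?_
          rw [hBdef, ← hAdef]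
          apply mul_le_mul_of_nonneg_left _ (Real.rpow_nonneg hA0 _)
          apply Real.rpow_le_rpow
            (Finset.sum_nonneg fun j _ => Real.rpow_nonneg (norm_nonneg _) _)
            ((hW φ hφ N).trans (by rw [hW'def]; linarith))
            (div_nonneg hs0.le hr0.le)
        calc B⁻¹ * ∑ j ∈ Finset.range N, b j ^ (r-s) * ‖φ (x j)‖ ^ s
            ≤ B⁻¹ * B := mul_le_mul_of_nonneg_left hHold (inv_nonneg.mpr hBpos.le)
          _ = 1 := inv_mul_cancel₀ hBpos.ne'
      have hTterm : ∀ j, ‖T (u j) (z j)‖ ^ s = B⁻¹ * b j ^ r := by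
        intro j
        show ‖T (((c0 * d j : ℝ) : 𝕜) • x j) (z j)‖ ^ s = _
        rw [show T (((c0 * d j : ℝ) : 𝕜) • x j) = ((c0 * d j : ℝ) : 𝕜) • T (x j)
            from map_smul T _ _,
          ContinuousLinearMap.smul_apply,
          aux_norm_coe_smul (mul_nonneg hc00 (hd0 j)),
          Real.mul_rpow (mul_nonneg hc00 (hd0 j)) (norm_nonneg _),
          Real.mul_rpow hc00 (hd0 j), hc0s, hds j, mul_assoc]
        congr 1
        rw [← Real.rpow_add' (hb0 j) (by rw [sub_add_cancel]; exact hr0.ne'),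
          sub_add_cancel]
      have hBA : B⁻¹ * A ≤ C := by
        have h := hC N u z huφ hz
        rw [Finset.sum_congr rfl (fun j _ => hTterm j), ← Finset.mul_sum, ← hAdef] at h
        exact h
      have hAC : A ≤ C * B := by
        calc A = B * (B⁻¹ * A) := by
              rw [← mul_assoc, mul_inv_cancel₀ hBpos.ne', one_mul]
          _ ≤ B * C := mul_le_mul_of_nonneg_left hBA hBpos.le
          _ = C * B := mul_comm _ _
      have hsplit : A = A ^ ((r-s)/r) * A ^ (s/r) := by
        rw [← Real.rpow_add hApos, ← add_div, sub_add_cancel,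
          div_self hr0.ne', Real.rpow_one]
      have hA1pos : 0 < A ^ ((r-s)/r) := Real.rpow_pos_of_pos hApos _
      have hstep : A ^ (s/r) ≤ (max C 1) * W' ^ (s/r) := by
        have hchain : A ^ ((r-s)/r) * A ^ (s/r)
            ≤ A ^ ((r-s)/r) * ((max C 1) * W' ^ (s/r)) := by
          calc A ^ ((r-s)/r) * A ^ (s/r) = A := hsplit.symm
            _ ≤ C * B := hAC
            _ = C * (A ^ ((r-s)/r) * W' ^ (s/r)) := by rw [hBdef]
            _ ≤ (max C 1) * (A ^ ((r-s)/r) * W' ^ (s/r)) := by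
                apply mul_le_mul_of_nonneg_right (le_max_left C 1)
                positivity
            _ = A ^ ((r-s)/r) * ((max C 1) * W' ^ (s/r)) := by ring
        exact le_of_mul_le_mul_left hchain hA1pos
      have h2 : (A ^ (s/r)) ^ (r/s) ≤ ((max C 1) * W' ^ (s/r)) ^ (r/s) :=
        Real.rpow_le_rpow (Real.rpow_nonneg hA0 _) hstep (div_nonneg hr0.le hs0.le)
      rw [← Real.rpow_mul hA0, div_mul_div_comm, mul_comm s r, div_self (by positivity),
        Real.rpow_one] at h2
      refine h2.trans ?_
      rw [Real.mul_rpow hmaxC.le (Real.rpow_nonneg hW'pos.le _),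
        ← Real.rpow_mul hW'pos.le, div_mul_div_comm, mul_comm s r,
        div_self (by positivity : r * s ≠ 0), Real.rpow_one, hDdef]
  have hsb : Summable fun j => b j ^ r :=
    summable_of_sum_range_le (fun j => Real.rpow_nonneg (hb0 j) r) hbound
  exact ((hsb.mul_left (M' ^ r)).congr fun j => (hkey j).symm)
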